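/- For p > 1, the inequality (p−1)·(σ_1^{p−2} + σ_2^{p−2})/2 ≥ (σ_2^{p−1} − σ_1^{p−1})/(σ_2 − σ_1) holds for all σ_1, σ_2 ∈ (0,∞) with σ_1 ≠ σ_2 if and only if p ∈ (1, 2] ∪ [3, ∞). -/

import Mathlib

open Real Set

private lemma rpow_hasDeriv' {c y : ℝ} (hy : 0 < y) :
    HasDerivAt (fun t : ℝ => t ^ c) (c * y ^ (c - 1)) y :=
  Real.hasDerivAt_rpow_const (Or.inl hy.ne')

private lemma rpow_contOn' (c x : ℝ) (hx : 0 < x) :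
    ContinuousOn (fun t : ℝ => t ^ c) (Ici x) := fun y hy =>
  (Real.continuousAt_rpow_const y c (Or.inl (hx.trans_le hy).ne')).continuousWithinAt

/-- derivative of the auxiliary function `g`. -/
private lemma g_hasDeriv (p x t : ℝ) (ht : 0 < t) :
    HasDerivAt (fun t : ℝ => x ^ (p-2) - t ^ (p-2) + (p-2) * t ^ (p-2) - (p-2) * x * t ^ (p-3))
      ((p-2) * (p-3) * (t ^ (p-4) * (t - x))) t := by
  have h2 : HasDerivAt (fun t : ℝ => t ^ (p-2)) ((p-2) * t ^ (p-3)) t := by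
    have := rpow_hasDeriv' (c := p-2) ht
    rwa [show p - 2 - 1 = p - 3 by ring] at this
  have h3 : HasDerivAt (fun t : ℝ => t ^ (p-3)) ((p-3) * t ^ (p-4)) t := by
    have := rpow_hasDeriv' (c := p-3) ht
    rwa [show p - 3 - 1 = p - 4 by ring] at this
  have H := (((hasDerivAt_const t (x ^ (p-2))).sub h2).add (h2.const_mul (p-2))).sub
      (h3.const_mul ((p-2)*x))
  refine H.congr_deriv ?_
  have E : t ^ (p-3) = t ^ (p-4) * t := by
    rw [show p-3 = (p-4)+1 by ring, Real.rpow_add_one ht.ne']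
  rw [E]; ring

private lemma g_contOn (p x : ℝ) (hx : 0 < x) :
    ContinuousOn
      (fun t : ℝ => x ^ (p-2) - t ^ (p-2) + (p-2) * t ^ (p-2) - (p-2) * x * t ^ (p-3))
      (Ici x) :=
  ((continuousOn_const.sub (rpow_contOn' (p-2) x hx)).add
    (continuousOn_const.mul (rpow_contOn' (p-2) x hx))).sub
    (continuousOn_const.mul (rpow_contOn' (p-3) x hx))

private lemma g_at_x (p x : ℝ) (hx : 0 < x) :
    x ^ (p-2) - x ^ (p-2) + (p-2) * x ^ (p-2) - (p-2) * x * x ^ (p-3) = 0 := by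
  have E : x ^ (p-2) = x ^ (p-3) * x := by
    rw [show p-2 = (p-3)+1 by ring, Real.rpow_add_one hx.ne']
  rw [E]; ring

private lemma g_nonneg (p x : ℝ) (hx : 0 < x) (hpq : 0 ≤ (p-2)*(p-3)) {y : ℝ} (hxy : x ≤ y) :
    0 ≤ x ^ (p-2) - y ^ (p-2) + (p-2) * y ^ (p-2) - (p-2) * x * y ^ (p-3) := by
  set g : ℝ → ℝ :=
    fun t => x ^ (p-2) - t ^ (p-2) + (p-2) * t ^ (p-2) - (p-2) * x * t ^ (p-3) with hg
  have hmono : MonotoneOn g (Ici x) := by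
    apply monotoneOn_of_deriv_nonneg (convex_Ici x) (g_contOn p x hx)
    · intro t ht
      rw [interior_Ici] at ht
      exact (g_hasDeriv p x t (hx.trans ht)).differentiableAt.differentiableWithinAt
    · intro t ht
      rw [interior_Ici] at ht
      have ht0 : 0 < t := hx.trans ht
      rw [(g_hasDeriv p x t ht0).deriv]
      exact mul_nonneg hpq
        (mul_nonneg (Real.rpow_pos_of_pos ht0 _).le (by linarith [(show x < t from ht).le]))
  have h0 : g x = 0 := g_at_x p x hx
  have := hmono self_mem_Ici (mem_Ici.2 hxy) hxy
  rw [h0] at this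
  exact this

private lemma g_neg (p x : ℝ) (hx : 0 < x) (hpq : (p-2)*(p-3) < 0) {y : ℝ} (hxy : x < y) :
    x ^ (p-2) - y ^ (p-2) + (p-2) * y ^ (p-2) - (p-2) * x * y ^ (p-3) < 0 := by
  set g : ℝ → ℝ :=
    fun t => x ^ (p-2) - t ^ (p-2) + (p-2) * t ^ (p-2) - (p-2) * x * t ^ (p-3) with hg
  have hanti : StrictAntiOn g (Ici x) := by
    apply strictAntiOn_of_deriv_neg (convex_Ici x) (g_contOn p x hx)
    intro t ht
    rw [interior_Ici] at ht
    have ht0 : 0 < t := hx.trans ht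
    rw [(g_hasDeriv p x t ht0).deriv]
    exact mul_neg_of_neg_of_pos hpq
      (mul_pos (Real.rpow_pos_of_pos ht0 _) (by linarith [show x < t from ht]))
  have h0 : g x = 0 := g_at_x p x hx
  have := hanti self_mem_Ici (mem_Ici.2 hxy.le) hxy
  rw [h0] at this
  exact this

/-- derivative of the main auxiliary function `F`. -/
private lemma F_hasDeriv (p x t : ℝ) (ht : 0 < t) :
    HasDerivAt
      (fun t : ℝ => (p-1) * (x ^ (p-2) + t ^ (p-2)) * (t - x) / 2 - (t ^ (p-1) - x ^ (p-1)))
      ((p-1)/2 *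
        (x ^ (p-2) - t ^ (p-2) + (p-2) * t ^ (p-2) - (p-2) * x * t ^ (p-3))) t := by
  have h2 : HasDerivAt (fun t : ℝ => t ^ (p-2)) ((p-2) * t ^ (p-3)) t := by
    have := rpow_hasDeriv' (c := p-2) ht
    rwa [show p - 2 - 1 = p - 3 by ring] at this
  have h1 : HasDerivAt (fun t : ℝ => t ^ (p-1)) ((p-1) * t ^ (p-2)) t := by
    have := rpow_hasDeriv' (c := p-1) ht
    rwa [show p - 1 - 1 = p - 2 by ring] at this
  have Hmul :
      HasDerivAt (fun t : ℝ => (p-1) * (x ^ (p-2) + t ^ (p-2)) * (t - x))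
        ((p-1) * ((p-2) * t ^ (p-3)) * (t - x) + (p-1) * (x ^ (p-2) + t ^ (p-2)) * 1) t := by
    have ha : HasDerivAt (fun t : ℝ => (p-1) * (x ^ (p-2) + t ^ (p-2)))
        ((p-1) * ((p-2) * t ^ (p-3))) t := by
      have := (((hasDerivAt_const t (x ^ (p-2))).add h2)).const_mul (p-1)
      rwa [zero_add] at this
    have hb : HasDerivAt (fun t : ℝ => t - x) 1 t := (hasDerivAt_id t).sub_const x
    exact ha.mul hb
  have H := (Hmul.div_const 2).sub (h1.sub_const (x ^ (p-1)))
  refine H.congr_deriv ?_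
  have E : t ^ (p-2) = t ^ (p-3) * t := by
    rw [show p-2 = (p-3)+1 by ring, Real.rpow_add_one ht.ne']
  rw [E]; ring

private lemma F_contOn (p x : ℝ) (hx : 0 < x) :
    ContinuousOn
      (fun t : ℝ => (p-1) * (x ^ (p-2) + t ^ (p-2)) * (t - x) / 2 - (t ^ (p-1) - x ^ (p-1)))
      (Ici x) := by
  apply ContinuousOn.sub
  · exact ((continuousOn_const.mul (continuousOn_const.add (rpow_contOn' (p-2) x hx))).mul
      ((continuous_id.continuousOn.sub continuousOn_const))).div_const 2
  · exact (rpow_contOn' (p-1) x hx).sub continuousOn_const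

/-- Main inequality, ordered case. -/
private lemma key (p x : ℝ) (hp : 1 < p) (hx : 0 < x) (hpq : 0 ≤ (p-2)*(p-3)) {y : ℝ}
    (hxy : x ≤ y) :
    y ^ (p-1) - x ^ (p-1) ≤ (p-1) * (x ^ (p-2) + y ^ (p-2)) * (y - x) / 2 := by
  set F : ℝ → ℝ :=
    fun t => (p-1) * (x ^ (p-2) + t ^ (p-2)) * (t - x) / 2 - (t ^ (p-1) - x ^ (p-1)) with hF
  have hmono : MonotoneOn F (Ici x) := by
    apply monotoneOn_of_deriv_nonneg (convex_Ici x) (F_contOn p x hx)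
    · intro t ht
      rw [interior_Ici] at ht
      exact (F_hasDeriv p x t (hx.trans ht)).differentiableAt.differentiableWithinAt
    · intro t ht
      rw [interior_Ici] at ht
      have ht0 : 0 < t := hx.trans ht
      rw [(F_hasDeriv p x t ht0).deriv]
      exact mul_nonneg (by linarith) (g_nonneg p x hx hpq ht.le)
  have h0 : F x = 0 := by simp [hF]
  have := hmono self_mem_Ici (mem_Ici.2 hxy) hxy
  rw [h0] at this
  simp only [hF] at this
  linarith

/-- Strict failure in the case `2 < p < 3`. -/
private lemma key_strict (p x : ℝ) (hp : 1 < p) (hx : 0 < x) (hpq : (p-2)*(p-3) < 0) {y : ℝ}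
    (hxy : x < y) :
    (p-1) * (x ^ (p-2) + y ^ (p-2)) * (y - x) / 2 < y ^ (p-1) - x ^ (p-1) := by
  set F : ℝ → ℝ :=
    fun t => (p-1) * (x ^ (p-2) + t ^ (p-2)) * (t - x) / 2 - (t ^ (p-1) - x ^ (p-1)) with hF
  have hanti : StrictAntiOn F (Ici x) := by
    apply strictAntiOn_of_deriv_neg (convex_Ici x) (F_contOn p x hx)
    intro t ht
    rw [interior_Ici] at ht
    have ht0 : 0 < t := hx.trans ht
    rw [(F_hasDeriv p x t ht0).deriv]
    exact mul_neg_of_pos_of_neg (by linarith) (g_neg p x hx hpq ht)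
  have h0 : F x = 0 := by simp [hF]
  have := hanti self_mem_Ici (mem_Ici.2 hxy.le) hxy
  rw [h0] at this
  simp only [hF] at this
  linarith

/-- for `p > 1`, the inequality
`(p-1)(σ₁^{p-2} + σ₂^{p-2})/2 ≥ (σ₂^{p-1} - σ₁^{p-1})/(σ₂ - σ₁)` holds for all
distinct `σ₁, σ₂ ∈ (0,∞)` if and only if `p ∈ (1,2] ∪ [3,∞)`. -/
theorem stmt_2 (p : ℝ) (hp : 1 < p) :
    (∀ σ₁ σ₂ : ℝ, 0 < σ₁ → 0 < σ₂ → σ₁ ≠ σ₂ →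
        (σ₂ ^ (p - 1) - σ₁ ^ (p - 1)) / (σ₂ - σ₁) ≤
          (p - 1) * (σ₁ ^ (p - 2) + σ₂ ^ (p - 2)) / 2) ↔
      p ∈ Set.Ioc (1:ℝ) 2 ∪ Set.Ici (3:ℝ) := by
  constructor
  · intro H
    by_contra hmem
    simp only [Set.mem_union, Set.mem_Ioc, Set.mem_Ici, not_or, not_and, not_le] at hmem
    obtain ⟨h2, h3⟩ := hmem
    have h2' : 2 < p := h2 hp
    have hpq : (p-2)*(p-3) < 0 := mul_neg_of_pos_of_neg (by linarith) (by linarith)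
    have hk := key_strict p 1 hp one_pos hpq (y := 2) one_lt_two
    have hH := H 1 2 one_pos two_pos (by norm_num)
    simp only [Real.one_rpow] at hk hH
    have e1 : ((2:ℝ) - 1) = 1 := by norm_num
    rw [e1, mul_one] at hk
    linarith
  · intro hmem σ₁ σ₂ h1 h2 hne
    have hpq : 0 ≤ (p-2)*(p-3) := by
      rcases hmem with h | h
      · nlinarith [h.2]
      · rw [Set.mem_Ici] at h
        exact mul_nonneg (by linarith) (by linarith)
    rcases hne.lt_or_gt with hlt | hlt
    · have hk := key p σ₁ hp h1 hpq hlt.le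
      rw [div_le_iff₀ (by linarith : (0:ℝ) < σ₂ - σ₁)]
      calc σ₂ ^ (p-1) - σ₁ ^ (p-1)
          ≤ (p-1) * (σ₁ ^ (p-2) + σ₂ ^ (p-2)) * (σ₂ - σ₁) / 2 := hk
        _ = (p-1) * (σ₁ ^ (p-2) + σ₂ ^ (p-2)) / 2 * (σ₂ - σ₁) := by ring
    · have hk := key p σ₂ hp h2 hpq hlt.le
      have e : (σ₂ ^ (p-1) - σ₁ ^ (p-1)) / (σ₂ - σ₁)
          = (σ₁ ^ (p-1) - σ₂ ^ (p-1)) / (σ₁ - σ₂) := by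
        rw [← neg_div_neg_eq]; ring_nf
      rw [e, div_le_iff₀ (by linarith : (0:ℝ) < σ₁ - σ₂)]
      calc σ₁ ^ (p-1) - σ₂ ^ (p-1)
          ≤ (p-1) * (σ₂ ^ (p-2) + σ₁ ^ (p-2)) * (σ₁ - σ₂) / 2 := hk
        _ = (p-1) * (σ₁ ^ (p-2) + σ₂ ^ (p-2)) / 2 * (σ₁ - σ₂) := by ring
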